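/- Let 0 < k < 1 and 0 < u ≤ 1, and set k̂ = 2√k/(1 + k) and v = √( (1 + k u² − √((1 − u²)(1 − k²u²))) / 2 ). Then ∫₀^u dz / √((1 − z²)(1 − k²z²)) = (2/(1 + k))·∫₀^v dz / √((1 − z²)(1 − k̂²z²)). -/

import Mathlib

open Set MeasureTheory intervalIntegral

noncomputable def lgS (k x : ℝ) : ℝ := Real.sqrt ((1 - x ^ 2) * (1 - k ^ 2 * x ^ 2))
noncomputable def lgA (k x : ℝ) : ℝ := (1 + k * x ^ 2 - lgS k x) / 2
noncomputable def lgG (k x : ℝ) : ℝ := Real.sqrt (lgA k x)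
noncomputable def lgF (m z : ℝ) : ℝ := 1 / Real.sqrt ((1 - z ^ 2) * (1 - m ^ 2 * z ^ 2))
noncomputable def lgD (k m x : ℝ) : ℝ :=
  (1 + k) / 2 * Real.sqrt ((1 - lgG k x ^ 2) * (1 - m ^ 2 * lgG k x ^ 2)) / lgS k x

lemma lgS_nonneg {k x : ℝ} : 0 ≤ lgS k x := Real.sqrt_nonneg _

lemma lg_kx {k x : ℝ} (hk1 : k < 1) (hk0 : 0 < k) (hx0 : 0 ≤ x) (hx1 : x ≤ 1) :
    k ^ 2 * x ^ 2 ≤ 1 ∧ x ^ 2 ≤ 1 ∧ k * x ^ 2 ≤ k := by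
  have h1 : k * x ≤ 1 := by nlinarith
  have h2 : 0 ≤ k * x := mul_nonneg hk0.le hx0
  have h3 : x ^ 2 ≤ 1 := by nlinarith
  refine ⟨by nlinarith, h3, by nlinarith⟩

lemma lg_kx' {k x : ℝ} (hk1 : k < 1) (hk0 : 0 < k) (hx0 : 0 ≤ x) (hx1 : x < 1) :
    k ^ 2 * x ^ 2 < 1 ∧ x ^ 2 < 1 := by
  have h1 : k * x < 1 := by nlinarith
  have h2 : 0 ≤ k * x := mul_nonneg hk0.le hx0
  exact ⟨by nlinarith, by nlinarith⟩

lemma lgS_pos {k x : ℝ} (hk1 : k < 1) (hk0 : 0 < k) (hx0 : 0 ≤ x) (hx1 : x < 1) :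
    0 < lgS k x := by
  obtain ⟨h1, h2⟩ := lg_kx' hk1 hk0 hx0 hx1
  exact Real.sqrt_pos.mpr (by nlinarith)

lemma lgS_sq {k x : ℝ} (hk1 : k < 1) (hk0 : 0 < k) (hx0 : 0 ≤ x) (hx1 : x ≤ 1) :
    lgS k x ^ 2 = (1 - x ^ 2) * (1 - k ^ 2 * x ^ 2) := by
  obtain ⟨h1, h2, h3⟩ := lg_kx hk1 hk0 hx0 hx1
  exact Real.sq_sqrt (by nlinarith)

lemma lgS_le {k x : ℝ} (hk1 : k < 1) (hk0 : 0 < k) (hx0 : 0 ≤ x) (hx1 : x ≤ 1) :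
    lgS k x ≤ 1 + k * x ^ 2 := by
  have h := lgS_sq hk1 hk0 hx0 hx1
  have h2 := lgS_nonneg (k := k) (x := x)
  have hB : 0 < 1 + k * x ^ 2 := by positivity
  nlinarith [sq_nonneg ((1 + k) * x)]

lemma lgA_nonneg {k x : ℝ} (hk1 : k < 1) (hk0 : 0 < k) (hx0 : 0 ≤ x) (hx1 : x ≤ 1) :
    0 ≤ lgA k x := by
  have := lgS_le hk1 hk0 hx0 hx1; unfold lgA; linarith

lemma lgA_pos {k x : ℝ} (hk1 : k < 1) (hk0 : 0 < k) (hx0 : 0 < x) (hx1 : x ≤ 1) :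
    0 < lgA k x := by
  have h := lgS_sq hk1 hk0 hx0.le hx1
  have h2 := lgS_nonneg (k := k) (x := x)
  have hB : 0 < 1 + k * x ^ 2 := by positivity
  have h5 : 0 < (1 + k) ^ 2 * x ^ 2 := by positivity
  have h3 : lgS k x < 1 + k * x ^ 2 := by nlinarith
  unfold lgA; linarith

lemma lgA_le {k x : ℝ} (hk1 : k < 1) (hk0 : 0 < k) (hx0 : 0 ≤ x) (hx1 : x ≤ 1) :
    lgA k x ≤ (1 + k) / 2 := by
  obtain ⟨h1, h2, h3⟩ := lg_kx hk1 hk0 hx0 hx1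
  have h4 := lgS_nonneg (k := k) (x := x)
  unfold lgA; linarith

lemma lg_m2 {k m : ℝ} (hk0 : 0 < k) (hm : m = 2 * Real.sqrt k / (1 + k)) :
    m ^ 2 = 4 * k / (1 + k) ^ 2 := by
  rw [hm, div_pow, mul_pow, Real.sq_sqrt hk0.le]; norm_num

lemma lgQ_pos' {k m z : ℝ} (hk1 : k < 1) (hk0 : 0 < k) (hm : m = 2 * Real.sqrt k / (1 + k))
    (hz : z ^ 2 ≤ (1 + k) / 2) : 0 < (1 - z ^ 2) * (1 - m ^ 2 * z ^ 2) := by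
  have hk : (0:ℝ) < 1 + k := by linarith
  have h1 := lg_m2 hk0 hm
  have h2 : m ^ 2 * z ^ 2 < 1 := by
    rw [h1, div_mul_eq_mul_div, div_lt_one (by positivity)]
    nlinarith [mul_le_mul_of_nonneg_left hz (by positivity : (0:ℝ) ≤ 4 * k)]
  have h3 : z ^ 2 < 1 := by linarith
  nlinarith

lemma lgQ_pos {k m x : ℝ} (hk1 : k < 1) (hk0 : 0 < k) (hm : m = 2 * Real.sqrt k / (1 + k))
    (hx0 : 0 ≤ x) (hx1 : x ≤ 1) :
    0 < (1 - lgG k x ^ 2) * (1 - m ^ 2 * lgG k x ^ 2) := by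
  apply lgQ_pos' hk1 hk0 hm
  rw [lgG, Real.sq_sqrt (lgA_nonneg hk1 hk0 hx0 hx1)]
  exact lgA_le hk1 hk0 hx0 hx1

lemma lg_hasDerivAt {k m x : ℝ} (hk1 : k < 1) (hk0 : 0 < k)
    (hm : m = 2 * Real.sqrt k / (1 + k)) (hx0 : 0 < x) (hx1 : x < 1) :
    HasDerivAt (lgG k) (lgD k m x) x := by
  have hk : (0:ℝ) < 1 + k := by linarith
  have hm2 := lg_m2 hk0 hm
  have hS := lgS_pos hk1 hk0 hx0.le hx1
  have hS2 := lgS_sq hk1 hk0 hx0.le hx1.le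
  have hA := lgA_pos hk1 hk0 hx0 hx1.le
  have hsA : 0 < Real.sqrt (lgA k x) := Real.sqrt_pos.mpr hA
  have hga : lgG k x ^ 2 = lgA k x := Real.sq_sqrt hA.le
  have hD0 : (1 - x ^ 2) * (1 - k ^ 2 * x ^ 2) ≠ 0 := (Real.sqrt_pos.mp hS).ne'
  have hx2 : x ^ 2 < 1 := by nlinarith
  have hTpos : 0 < 1 + k ^ 2 - 2 * k ^ 2 * x ^ 2 := by
    nlinarith [mul_le_mul_of_nonneg_left hx2.le (by positivity : (0:ℝ) ≤ 2 * k ^ 2)]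
  have hQp : 0 < (1 + k ^ 2 - 2 * k ^ 2 * x ^ 2) + 2 * k * lgS k x := by
    nlinarith [lgS_nonneg (k := k) (x := x)]
  -- derivative chain
  have h1 : HasDerivAt (fun y : ℝ => 1 - y ^ 2) (-(2 * x)) x := by
    simpa using ((hasDerivAt_pow 2 x).const_sub 1)
  have h2 : HasDerivAt (fun y : ℝ => 1 - k ^ 2 * y ^ 2) (-(k ^ 2 * (2 * x))) x := by
    simpa using (((hasDerivAt_pow 2 x).const_mul (k ^ 2)).const_sub 1)
  have hD1 : HasDerivAt (fun y : ℝ => (1 - y ^ 2) * (1 - k ^ 2 * y ^ 2))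
      (-(2 * x) * (1 + k ^ 2 - 2 * k ^ 2 * x ^ 2)) x := by
    exact (h1.fun_mul h2).congr_deriv (by ring)
  have hSd : HasDerivAt (lgS k)
      ((-(2 * x) * (1 + k ^ 2 - 2 * k ^ 2 * x ^ 2)) / (2 * lgS k x)) x := hD1.sqrt hD0
  have h3 : HasDerivAt (fun y : ℝ => 1 + k * y ^ 2) (k * (2 * x)) x := by
    simpa using (((hasDerivAt_pow 2 x).const_mul k).const_add 1)
  have hAd : HasDerivAt (lgA k)
      ((k * (2 * x) - (-(2 * x) * (1 + k ^ 2 - 2 * k ^ 2 * x ^ 2)) / (2 * lgS k x)) / 2) x :=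
    (h3.sub hSd).div_const 2
  have hgd := hAd.sqrt hA.ne'
  refine hgd.congr_deriv (Eq.symm ?_)
  -- now the algebraic identity
  have hQ1 : (1 - m ^ 2 * lgA k x) * (1 + k) ^ 2
      = (1 + k ^ 2 - 2 * k ^ 2 * x ^ 2) + 2 * k * lgS k x := by
    rw [hm2, lgA]; field_simp; ring
  have hQ2 : (1 - lgA k x) * lgA k x
      = x ^ 2 * ((1 + k ^ 2 - 2 * k ^ 2 * x ^ 2) + 2 * k * lgS k x) / 4 := by
    rw [lgA]; linear_combination (-(1/4) : ℝ) * hS2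
  have hQA' : (1 - lgG k x ^ 2) * (1 - m ^ 2 * lgG k x ^ 2) * lgA k x * (4 * (1 + k) ^ 2)
      = (x * ((1 + k ^ 2 - 2 * k ^ 2 * x ^ 2) + 2 * k * lgS k x)) ^ 2 := by
    rw [hga]
    linear_combination (4 * (1 - lgA k x) * lgA k x) * hQ1
      + (4 * ((1 + k ^ 2 - 2 * k ^ 2 * x ^ 2) + 2 * k * lgS k x)) * hQ2
  have hQA : (1 - lgG k x ^ 2) * (1 - m ^ 2 * lgG k x ^ 2) * lgA k x
      = (x * ((1 + k ^ 2 - 2 * k ^ 2 * x ^ 2) + 2 * k * lgS k x) / (2 * (1 + k))) ^ 2 := by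
    rw [div_pow, eq_div_iff (by positivity : ((2 : ℝ) * (1 + k)) ^ 2 ≠ 0)]
    linear_combination hQA'
  have hQnn : 0 ≤ (1 - lgG k x ^ 2) * (1 - m ^ 2 * lgG k x ^ 2) :=
    (lgQ_pos hk1 hk0 hm hx0.le hx1.le).le
  have hsqrtQ : Real.sqrt ((1 - lgG k x ^ 2) * (1 - m ^ 2 * lgG k x ^ 2))
      = x * ((1 + k ^ 2 - 2 * k ^ 2 * x ^ 2) + 2 * k * lgS k x) / (2 * (1 + k))
        / Real.sqrt (lgA k x) := by
    rw [eq_div_iff hsA.ne']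
    rw [show Real.sqrt (lgA k x) = Real.sqrt (lgA k x) from rfl]
    rw [← Real.sqrt_mul hQnn, hQA]
    exact Real.sqrt_sq (by positivity)
  have hstep : (1 + k) / 2 * Real.sqrt ((1 - lgG k x ^ 2) * (1 - m ^ 2 * lgG k x ^ 2))
      = x * ((1 + k ^ 2 - 2 * k ^ 2 * x ^ 2) + 2 * k * lgS k x) / (4 * Real.sqrt (lgA k x)) := by
    rw [hsqrtQ, div_div, div_mul_div_comm, div_eq_div_iff (by positivity) (by positivity)]
    ring
  rw [lgD, div_eq_div_iff hS.ne' (by positivity : (2 : ℝ) * Real.sqrt (lgA k x) ≠ 0)]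
  rw [hstep]
  field_simp [hS.ne', hsA.ne']
  ring

lemma lg_prod {k m x : ℝ} (hk1 : k < 1) (hk0 : 0 < k) (hm : m = 2 * Real.sqrt k / (1 + k))
    (hx0 : 0 < x) (hx1 : x < 1) :
    lgD k m x * lgF m (lgG k x) = (1 + k) / 2 * lgF k x := by
  have hQ := lgQ_pos hk1 hk0 hm hx0.le hx1.le
  have hsQ : 0 < Real.sqrt ((1 - lgG k x ^ 2) * (1 - m ^ 2 * lgG k x ^ 2)) :=
    Real.sqrt_pos.mpr hQ
  have hS := lgS_pos hk1 hk0 hx0.le hx1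
  rw [lgD, lgF, lgF, show Real.sqrt ((1 - x ^ 2) * (1 - k ^ 2 * x ^ 2)) = lgS k x from rfl]
  field_simp
  ring
  exact mul_inv_cancel₀ (ne_of_gt (Real.sqrt_pos.mpr (by nlinarith [hQ])))

lemma lgG_cont {k : ℝ} : Continuous (lgG k) := by
  show Continuous fun x => lgG k x
  unfold lgG lgA lgS; fun_prop

lemma lgF_contOn {k m : ℝ} (hk1 : k < 1) (hk0 : 0 < k)
    (hm : m = 2 * Real.sqrt k / (1 + k)) :
    ContinuousOn (lgF m) (Icc 0 (Real.sqrt ((1 + k) / 2))) := by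
  unfold lgF
  refine ContinuousOn.div continuousOn_const (Continuous.continuousOn (by fun_prop)) ?_
  intro z hz
  have hz2 : z ^ 2 ≤ (1 + k) / 2 := by
    have := pow_le_pow_left₀ hz.1 hz.2 2
    rwa [Real.sq_sqrt (by linarith : (0:ℝ) ≤ (1 + k) / 2)] at this
  exact (Real.sqrt_pos.mpr (lgQ_pos' hk1 hk0 hm hz2)).ne'

lemma lgF_intervalIntegrable {k u : ℝ} (hk1 : k < 1) (hk0 : 0 < k)
    (hu0 : 0 < u) (hu1 : u ≤ 1) :
    IntervalIntegrable (lgF k) volume 0 u := by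
  have hk2 : (0:ℝ) < 1 - k ^ 2 := by nlinarith
  have hc : 0 < Real.sqrt (1 - k ^ 2) := Real.sqrt_pos.mpr hk2
  have h1 : IntervalIntegrable (fun x : ℝ => x ^ (-(1/2) : ℝ)) volume 1 (1 - u) :=
    intervalIntegral.intervalIntegrable_rpow' (by norm_num)
  have h2 : IntervalIntegrable (fun x : ℝ => (1 - x) ^ (-(1/2) : ℝ)) volume 0 u := by
    simpa using h1.comp_sub_left 1
  have h3 : IntervalIntegrable
      (fun x : ℝ => (Real.sqrt (1 - k ^ 2))⁻¹ * (1 - x) ^ (-(1/2) : ℝ)) volume 0 u :=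
    h2.const_mul _
  refine h3.mono_fun ?_ ?_
  · apply Measurable.aestronglyMeasurable
    unfold lgF
    exact measurable_const.div (Real.continuous_sqrt.measurable.comp
      (by fun_prop : Measurable fun z : ℝ => (1 - z ^ 2) * (1 - k ^ 2 * z ^ 2)))
  · filter_upwards [ae_restrict_mem measurableSet_uIoc] with x hx
    rw [uIoc_of_le hu0.le] at hx
    have hx0 : 0 < x := hx.1
    have hx1 : x ≤ 1 := hx.2.trans hu1
    have hb0 : (0:ℝ) ≤ 1 - x := by linarith
    have hrpow : (1 - x) ^ (-(1/2) : ℝ) = (Real.sqrt (1 - x))⁻¹ := by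
      rw [Real.rpow_neg hb0, Real.sqrt_eq_rpow]
    rcases eq_or_lt_of_le hx1 with h | h
    · have h0 : lgF k x = 0 := by
        unfold lgF
        rw [h]; norm_num
      rw [h0]
      simp only [norm_zero]
      positivity
    · have hS := lgS_pos hk1 hk0 hx0.le h
      have hsx : 0 < Real.sqrt (1 - x) := Real.sqrt_pos.mpr (by linarith)
      have hx2 : x ^ 2 ≤ 1 := by nlinarith
      have hkx1 : k * x ≤ 1 := by nlinarith
      have hkx0 : 0 ≤ k * x := mul_nonneg hk0.le hx0.le
      have hkx : k ^ 2 * x ^ 2 ≤ 1 := by nlinarith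
      have key : Real.sqrt (1 - k ^ 2) * Real.sqrt (1 - x) ≤ lgS k x := by
        rw [← Real.sqrt_mul hk2.le]
        apply Real.sqrt_le_sqrt
        nlinarith [mul_nonneg (mul_nonneg hb0 hx0.le) (sub_nonneg.mpr hkx),
          mul_nonneg (mul_nonneg hb0 (sq_nonneg k)) (sub_nonneg.mpr hx2)]
      have hF : lgF k x = (lgS k x)⁻¹ := by unfold lgF lgS; rw [one_div]
      rw [Real.norm_eq_abs, Real.norm_eq_abs, hF, hrpow]
      rw [abs_of_nonneg (by positivity), abs_of_nonneg (by positivity)]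
      rw [← mul_inv]
      exact inv_anti₀ (by positivity) key

/-- The Legendre Gleichung (the so-called Landen transformation): the
incomplete elliptic integral of the first kind with modulus `k` is related to
one with the transformed modulus `k̂ = 2√k/(1 + k)`. -/
theorem legendre_gleichung (k u : ℝ) (hk0 : 0 < k) (hk1 : k < 1)
    (hu0 : 0 < u) (hu1 : u ≤ 1)
    (khat v : ℝ)
    (hkhat : khat = 2 * Real.sqrt k / (1 + k))
    (hv : v = Real.sqrt ((1 + k * u ^ 2
      - Real.sqrt ((1 - u ^ 2) * (1 - k ^ 2 * u ^ 2))) / 2)) :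
    ∫ z in (0:ℝ)..u,
        1 / Real.sqrt ((1 - z ^ 2) * (1 - k ^ 2 * z ^ 2))
      = 2 / (1 + k) * ∫ z in (0:ℝ)..v,
          1 / Real.sqrt ((1 - z ^ 2) * (1 - khat ^ 2 * z ^ 2)) := by
  have hk : (0:ℝ) < 1 + k := by linarith
  have hne1 : ∀ᵐ x : ℝ, x ≠ 1 := by
    rw [ae_iff]
    simp only [ne_eq, not_not, setOf_eq_eq_singleton]
    exact Real.volume_singleton
  have hne0 : ∀ᵐ x : ℝ, x ≠ 0 := by
    rw [ae_iff]
    simp only [ne_eq, not_not, setOf_eq_eq_singleton]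
    exact Real.volume_singleton
  -- image bounds
  have himg : ∀ x ∈ Icc (0:ℝ) u, lgG k x ∈ Icc 0 (Real.sqrt ((1 + k) / 2)) := by
    intro x hx
    exact ⟨Real.sqrt_nonneg _, Real.sqrt_le_sqrt (lgA_le hk1 hk0 hx.1 (hx.2.trans hu1))⟩
  -- integrability of the pulled-back integrand
  have hbase : IntervalIntegrable (fun x => (1 + k) / 2 * lgF k x) volume 0 u :=
    (lgF_intervalIntegrable hk1 hk0 hu0 hu1).const_mul _
  have haeeq : ∀ᵐ x ∂(volume.restrict (Set.uIoc (0:ℝ) u)),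
      (1 + k) / 2 * lgF k x = lgD k khat x • lgF khat (lgG k x) := by
    filter_upwards [ae_restrict_mem measurableSet_uIoc, ae_restrict_of_ae hne1]
      with x hx hx1
    rw [uIoc_of_le hu0.le] at hx
    have hxu : x < 1 := lt_of_le_of_ne (hx.2.trans hu1) hx1
    rw [smul_eq_mul, lg_prod hk1 hk0 hkhat hx.1 hxu]
  have hInt2 : IntegrableOn (fun x => lgD k khat x • lgF khat (lgG k x)) (Set.uIcc (0:ℝ) u) := by
    rw [← intervalIntegrable_iff']
    exact hbase.congr_ae haeeq
  -- the substitution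
  have hmin : min (0:ℝ) u = 0 := min_eq_left hu0.le
  have hmax : max (0:ℝ) u = u := max_eq_right hu0.le
  have hsub : (∫ x in (0:ℝ)..u, lgD k khat x • (lgF khat ∘ lgG k) x)
      = ∫ z in (lgG k 0)..(lgG k u), lgF khat z := by
    apply intervalIntegral.integral_comp_smul_deriv''' (lgG_cont).continuousOn
    · rw [hmin, hmax]
      intro x hx
      exact (lg_hasDerivAt hk1 hk0 hkhat hx.1 (lt_of_lt_of_le hx.2 hu1)).hasDerivWithinAt
    · rw [hmin, hmax]
      refine (lgF_contOn hk1 hk0 hkhat).mono ?_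
      rintro y ⟨x, hx, rfl⟩
      exact himg x ⟨hx.1.le, hx.2.le⟩
    · refine ((lgF_contOn hk1 hk0 hkhat).integrableOn_Icc).mono_set ?_
      rw [uIcc_of_le hu0.le]
      rintro y ⟨x, hx, rfl⟩
      exact himg x hx
    · exact hInt2
  have hG0 : lgG k 0 = 0 := by
    norm_num [lgG, lgA, lgS]
  have hGu : lgG k u = v := by
    rw [hv]; rfl
  have hcong : (∫ x in (0:ℝ)..u, lgD k khat x • (lgF khat ∘ lgG k) x)
      = ∫ x in (0:ℝ)..u, (1 + k) / 2 * lgF k x := by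
    apply intervalIntegral.integral_congr_ae
    filter_upwards [hne1] with x hx1 hmem
    rw [uIoc_of_le hu0.le] at hmem
    have hxu : x < 1 := lt_of_le_of_ne (hmem.2.trans hu1) hx1
    simp only [Function.comp_apply, smul_eq_mul]
    exact lg_prod hk1 hk0 hkhat hmem.1 hxu
  have hmain : (∫ z in (0:ℝ)..v, lgF khat z) = (1 + k) / 2 * ∫ x in (0:ℝ)..u, lgF k x := by
    have h5 : (∫ z in (0:ℝ)..v, lgF khat z) = ∫ z in (lgG k 0)..(lgG k u), lgF khat z := by
      rw [hG0, hGu]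
    rw [h5, ← hsub, hcong, intervalIntegral.integral_const_mul]
  show (∫ z in (0:ℝ)..u, lgF k z) = 2 / (1 + k) * ∫ z in (0:ℝ)..v, lgF khat z
  rw [hmain]
  field_simp
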